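/- The subspace S_2(K) of symmetric 2×2 matrices over K consists only of diagonalizable matrices if and only if K is formally real and Pythagorean. -/

import Mathlib

open Matrix
def IsDiagonalizable {K : Type*} [Field K] {m : Type*} [Fintype m] [DecidableEq m]
    (A : Matrix m m K) : Prop :=
  ∃ P : Matrix m m K, IsUnit P ∧ (P⁻¹ * A * P).IsDiag
def FormallyReal (K : Type*) [Field K] : Prop := ¬ IsSumSq (-1 : K)
def Pythagorean (K : Type*) [Field K] : Prop := ∀ a b : K, ∃ c : K, a ^ 2 + b ^ 2 = c ^ 2

private lemma pyth_sumsq {K : Type*} [Field K] (hP : Pythagorean K) {s : K}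
    (hs : IsSumSq s) : ∃ c : K, s = c ^ 2 := by
  induction hs with
  | zero => exact ⟨0, by ring⟩
  | sq_add a _ ih =>
      obtain ⟨d, hd⟩ := ih
      obtain ⟨c, hc⟩ := hP a d
      exact ⟨c, by rw [hd, ← hc]; ring⟩

private lemma conj_sq {K : Type*} [Field K] (A P : Matrix (Fin 2) (Fin 2) K)
    (hdet : IsUnit P.det) :
    (P⁻¹ * A * P) * (P⁻¹ * A * P) = P⁻¹ * (A * A) * P := by
  have h : P * P⁻¹ = 1 := Matrix.mul_nonsing_inv _ hdet
  calc (P⁻¹*A*P) * (P⁻¹*A*P) = P⁻¹*A*(P*P⁻¹)*(A*P) := by noncomm_ring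
    _ = P⁻¹*(A*A)*P := by rw [h]; noncomm_ring

private lemma diag_hard {K : Type*} [Field K] (a b d e : K) (two_ne : (2:K) ≠ 0)
    (hb0 : b ≠ 0) (he0 : e ≠ 0) (he : (a - d) ^ 2 + (2 * b) ^ 2 = e ^ 2) :
    IsDiagonalizable !![a, b; b, d] := by
  obtain ⟨l1, hl1⟩ : ∃ x : K, x = (a + d + e) / 2 := ⟨_, rfl⟩
  obtain ⟨l2, hl2⟩ : ∃ x : K, x = (a + d - e) / 2 := ⟨_, rfl⟩
  have hroot1 : l1 ^ 2 - (a + d) * l1 + (a * d - b ^ 2) = 0 := by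
    subst hl1; field_simp; linear_combination (-1 : K) * he
  have hroot2 : l2 ^ 2 - (a + d) * l2 + (a * d - b ^ 2) = 0 := by
    subst hl2; field_simp; linear_combination (-1 : K) * he
  have hdiff : l2 - l1 = -e := by rw [hl1, hl2]; field_simp; ring
  obtain ⟨P, hP⟩ : ∃ P : Matrix (Fin 2) (Fin 2) K, P = !![b, b; l1 - a, l2 - a] := ⟨_, rfl⟩
  have hdetP : P.det = -(b * e) := by
    rw [hP, Matrix.det_fin_two_of]
    linear_combination b * hdiff
  have hdetU : IsUnit P.det := by
    rw [hdetP]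
    exact (neg_ne_zero.mpr (mul_ne_zero hb0 he0)).isUnit
  have hPu : IsUnit P := (Matrix.isUnit_iff_isUnit_det P).mpr hdetU
  have hAP : !![a, b; b, d] * P = P * !![l1, 0; 0, l2] := by
    rw [hP]
    ext i j
    fin_cases i <;> fin_cases j <;>
      simp [Matrix.mul_apply, Fin.sum_univ_two] <;>
      first
        | ring1
        | linear_combination -hroot1
        | linear_combination -hroot2
  refine ⟨P, hPu, ?_⟩
  have hconj : P⁻¹ * !![a, b; b, d] * P = !![l1, 0; 0, l2] := by
    rw [Matrix.mul_assoc, hAP, ← Matrix.mul_assoc, Matrix.nonsing_inv_mul _ hdetU,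
      Matrix.one_mul]
  rw [hconj]
  intro i j hij
  fin_cases i <;> fin_cases j <;> simp_all

theorem stmt5 {K : Type*} [Field K] :
    (∀ A : Matrix (Fin 2) (Fin 2) K, A.IsSymm → IsDiagonalizable A) ↔
      (FormallyReal K ∧ Pythagorean K) := by
  constructor
  · intro H
    have hPy : Pythagorean K := by
      intro a b
      obtain ⟨A, hAdef⟩ : ∃ M : Matrix (Fin 2) (Fin 2) K, M = !![a, b; b, -a] := ⟨_, rfl⟩
      have hsymm : A.IsSymm := by
        unfold Matrix.IsSymm
        ext i j
        fin_cases i <;> fin_cases j <;> simp [hAdef]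
      obtain ⟨P, hPu, hdiag⟩ := H A hsymm
      have hdet : IsUnit P.det := (Matrix.isUnit_iff_isUnit_det P).mp hPu
      have hA2 : A * A = (a ^ 2 + b ^ 2) • (1 : Matrix (Fin 2) (Fin 2) K) := by
        ext i j
        fin_cases i <;> fin_cases j <;>
          simp [hAdef, Matrix.mul_apply, Fin.sum_univ_two, Matrix.one_apply] <;> ring
      have hD2 : (P⁻¹ * A * P) * (P⁻¹ * A * P)
          = (a ^ 2 + b ^ 2) • (1 : Matrix (Fin 2) (Fin 2) K) := by
        rw [conj_sq A P hdet, hA2, Matrix.mul_smul, Matrix.smul_mul, Matrix.mul_one,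
          Matrix.nonsing_inv_mul _ hdet]
      refine ⟨(P⁻¹ * A * P) 0 0, ?_⟩
      have h00 : ((P⁻¹ * A * P) * (P⁻¹ * A * P)) 0 0
          = (P⁻¹ * A * P) 0 0 * (P⁻¹ * A * P) 0 0
            + (P⁻¹ * A * P) 0 1 * (P⁻¹ * A * P) 1 0 := by
        simp [Matrix.mul_apply, Fin.sum_univ_two]
      have hoff : (P⁻¹ * A * P) 0 1 = 0 := hdiag (by decide : (0 : Fin 2) ≠ 1)
      rw [hD2] at h00
      simp [Matrix.one_apply, hoff] at h00
      rw [h00]; ring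
    refine ⟨?_, hPy⟩
    intro hss
    obtain ⟨c, hc⟩ := pyth_sumsq hPy hss
    obtain ⟨A, hAdef⟩ : ∃ M : Matrix (Fin 2) (Fin 2) K, M = !![1, c; c, -1] := ⟨_, rfl⟩
    have hsymm : A.IsSymm := by
      unfold Matrix.IsSymm
      ext i j
      fin_cases i <;> fin_cases j <;> simp [hAdef]
    obtain ⟨P, hPu, hdiag⟩ := H A hsymm
    have hdet : IsUnit P.det := (Matrix.isUnit_iff_isUnit_det P).mp hPu
    have hc2 : c ^ 2 = -1 := hc.symm
    have hA2 : A * A = 0 := by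
      ext i j
      fin_cases i <;> fin_cases j <;>
        simp [hAdef, Matrix.mul_apply, Fin.sum_univ_two] <;>
        linear_combination hc2
    have hD2 : (P⁻¹ * A * P) * (P⁻¹ * A * P) = 0 := by
      rw [conj_sq A P hdet, hA2, Matrix.mul_zero, Matrix.zero_mul]
    obtain ⟨D, hDdef⟩ : ∃ D : Matrix (Fin 2) (Fin 2) K, D = P⁻¹ * A * P := ⟨_, rfl⟩
    rw [← hDdef] at hdiag hD2
    have e01 : D 0 1 = 0 := hdiag (by decide : (0 : Fin 2) ≠ 1)
    have e10 : D 1 0 = 0 := hdiag (by decide : (1 : Fin 2) ≠ 0)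
    have h00 : D 0 0 = 0 := by
      have h : D 0 0 * D 0 0 = (D * D) 0 0 := by
        rw [Matrix.mul_apply, Fin.sum_univ_two, e01, e10]; ring
      rw [hD2] at h
      exact mul_self_eq_zero.mp (by simpa using h)
    have h11 : D 1 1 = 0 := by
      have h : D 1 1 * D 1 1 = (D * D) 1 1 := by
        rw [Matrix.mul_apply, Fin.sum_univ_two, e01, e10]; ring
      rw [hD2] at h
      exact mul_self_eq_zero.mp (by simpa using h)
    have hDzero : P⁻¹ * A * P = 0 := by
      rw [← hDdef]
      ext i j
      fin_cases i <;> fin_cases j <;> simp [h00, h11, e01, e10]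
    have hAzero : A = 0 := by
      have hAPz : A * P = 0 := by
        have h1 : P * (P⁻¹ * A * P) = A * P := by
          rw [← Matrix.mul_assoc, ← Matrix.mul_assoc, Matrix.mul_nonsing_inv _ hdet,
            Matrix.one_mul]
        rw [← h1, hDzero, Matrix.mul_zero]
      calc A = A * P * P⁻¹ := by
              rw [Matrix.mul_assoc, Matrix.mul_nonsing_inv _ hdet, Matrix.mul_one]
        _ = 0 := by rw [hAPz, Matrix.zero_mul]
    have h10 : (1 : K) = 0 := by
      have := congrFun (congrFun hAzero 0) 0
      rw [hAdef] at this
      simpa using this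
    exact one_ne_zero h10
  · rintro ⟨hFR, hPy⟩ A hsymm
    have two_ne : (2 : K) ≠ 0 := by
      intro h2
      apply hFR
      have h1 : (-1 : K) = 1 * 1 + 0 := by linear_combination -h2
      rw [h1]
      exact IsSumSq.sq_add 1 IsSumSq.zero
    have hba : A 1 0 = A 0 1 := by
      have := congrFun (congrFun hsymm 0) 1
      simpa [Matrix.transpose_apply] using this
    have hAeq : A = !![A 0 0, A 0 1; A 0 1, A 1 1] := by
      ext i j
      fin_cases i <;> fin_cases j <;> simp [hba]
    by_cases hb0 : A 0 1 = 0
    · refine ⟨1, isUnit_one, ?_⟩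
      have hinv : (1 : Matrix (Fin 2) (Fin 2) K)⁻¹ = 1 := by simp
      rw [hinv, Matrix.one_mul, Matrix.mul_one]
      intro i j hij
      fin_cases i <;> fin_cases j
      · exact absurd rfl hij
      · exact hb0
      · exact hba.trans hb0
      · exact absurd rfl hij
    · obtain ⟨e, he⟩ := hPy (A 0 0 - A 1 1) (2 * A 0 1)
      have he0 : e ≠ 0 := by
        intro h0
        apply hFR
        rw [h0] at he
        have h2b : (2 * A 0 1 : K) ≠ 0 := mul_ne_zero two_ne hb0
        have key : (-1 : K) = ((A 0 0 - A 1 1) / (2 * A 0 1)) * ((A 0 0 - A 1 1) / (2 * A 0 1)) + 0 := by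
          field_simp
          linear_combination -he
        rw [key]
        exact IsSumSq.sq_add _ IsSumSq.zero
      rw [hAeq]
      exact diag_hard (A 0 0) (A 0 1) (A 1 1) e two_ne hb0 he0 he
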